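/- If m ≥ n + 2 and H_t(m) is defined for a tree ordinal t, then h_t(n) is defined and h_t(n) ≤ H_t(m), where H is the tree-ordinal Hardy function with standard fundamental sequences and h the tree-ordinal Hardy function with worm-induced fundamental sequences (with argument increment at limits). -/

import Mathlib

/-- Tree ordinals as formal terms: `0`, and `ω^{t₁} + ⋯ + ω^{tₙ}` for tree
ordinals `t₁, …, tₙ` (no ordering condition on the exponents).
`oadd e r` denotes `r + ω^e`, i.e. `e` is the exponent of the **rightmost**
summand and `r` collects the summands to its left. -/
inductive T : Type where
  | zero : T
  | oadd : T → T → T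
deriving DecidableEq

namespace T

/-- The induced ordinal `o(t)` of a tree term (ordinal arithmetic, so smaller
summands may be absorbed). -/
noncomputable def o : T → Ordinal.{0}
  | zero => 0
  | oadd e r => o r + Ordinal.omega0 ^ o e

/-- The norm: `N0 = 0`, `N(ω^α + β) = 1 + Nα + Nβ`. -/
def norm : T → ℕ
  | zero => 0
  | oadd e r => 1 + norm e + norm r

/-- `rep e r x = r + ω^e · x`. -/
def rep (e r : T) : ℕ → T
  | 0 => r
  | x + 1 => oadd e (rep e r x)

/-- The standard fundamental sequences on tree terms:
`0[x] = 0`, `1[x] = 0`, `(t+1)[x] = t`, `(t + ω^{s+1})[x] = t + ω^s · x`,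
`(t + ω^λ)[x] = t + ω^{λ[x]}` for a limit term `λ`. -/
def fund : T → ℕ → T
  | zero, _ => zero
  | oadd zero r, _ => r
  | oadd (oadd zero e') r, x => rep e' r x
  | oadd (oadd (oadd a b) e') r, x => oadd (fund (oadd (oadd a b) e') x) r

/-- Auxiliary sum for the ordinal correction function: `crSum t m` adds
`N(ω^{tᵢ})` for each summand `ω^{tᵢ}` of `t` whose exponent is smaller (as an
ordinal) than some exponent strictly to its right (where `m` is the maximum of
the exponents lying to the right of all of `t`). -/
noncomputable def crSum : T → Ordinal.{0} → ℕ
  | zero, _ => 0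
  | oadd e r, m => (if o e < m then 1 + norm e else 0) + crSum r (max m (o e))

mutual
/-- The ordinal correction function `Cr`:
`Cr(0) = 0` and `Cr(t) = Σ {N(ω^{tᵢ}) : tᵢ < tⱼ for some j > i} + max Cr(tᵢ)`. -/
noncomputable def cr : T → ℕ
  | zero => 0
  | oadd e r => crSum (oadd e r) 0 + max (cr e) (crMax r)

/-- Maximum of `Cr` over the exponents of a term. -/
noncomputable def crMax : T → ℕ
  | zero => 0
  | oadd e r => max (cr e) (crMax r)
end

/-- Cantor normal form predicate: exponents are (weakly) increasing from the
rightmost summand leftwards, and all exponents are themselves in CNF.  Terms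
satisfying `NF` faithfully represent the ordinals below `ε₀`. -/
def NF : T → Prop
  | zero => True
  | oadd e r => NF e ∧ NF r ∧ (match r with | zero => True | oadd f _ => o e ≤ o f)

/-- A term is a limit iff its rightmost summand has nonzero exponent. -/
def IsLim : T → Prop
  | oadd (oadd _ _) _ => True
  | _ => False

/-- Drop rightmost summands with exponent of ordinal value `< b`
(the absorption performed by ordinal addition). -/
noncomputable def cleanup (b : Ordinal.{0}) : T → T
  | zero => zero
  | oadd f s => if o f < b then cleanup b s else oadd f s

/-- Normalization of a tree term to the Cantor normal form of its induced
ordinal: `toNF t` is `NF`, and `o (toNF t) = o t`. -/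
noncomputable def toNF : T → T
  | zero => zero
  | oadd e r => oadd (toNF e) (cleanup (o e) (toNF r))

/-- `repOne r x = r + x`. -/
def repOne (r : T) : ℕ → T
  | 0 => r
  | x + 1 => oadd zero (repOne r x)

/-- `repPair s r x = r + (ω^s + 1) · x`. -/
def repPair (s r : T) : ℕ → T
  | 0 => r
  | x + 1 => oadd zero (oadd s (repPair s r x))

/-- The worm-induced fundamental sequences `⟦·⟧` on tree terms:
`0⟦x⟧ = 0`, `(t+1)⟦x⟧ = t`, `(t+ω)⟦x⟧ = t + x`,
`(t + ω^{s+1})⟦x⟧ = t + (ω^s + 1) · x` for `s ≠ 0`, and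
`(t + ω^λ)⟦x⟧ = t + ω^{λ⟦x⟧}` for a limit term `λ`. -/
def fundW : T → ℕ → T
  | zero, _ => zero
  | oadd zero r, _ => r
  | oadd (oadd zero zero) r, x => repOne r x
  | oadd (oadd zero (oadd a b)) r, x => repPair (oadd a b) r x
  | oadd (oadd (oadd a b) e') r, x => oadd (fundW (oadd (oadd a b) e') x) r

end T

/-- Graph of the Hardy functions (with the standard fundamental sequences):
`H_0(x) = x`, `H_{t+1}(x) = H_t(x+1)`, `H_t(x) = H_{t[x]}(x)` for limit `t`.
`HG t x y` means `H_t(x)` is defined with value `y`. -/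
inductive HG : T → ℕ → ℕ → Prop where
  | zero (x) : HG T.zero x x
  | succ {r x y} : HG r (x + 1) y → HG (T.oadd T.zero r) x y
  | lim {e r x y} (he : e ≠ T.zero) :
      HG (T.fund (T.oadd e r) x) x y → HG (T.oadd e r) x y

/-- Graph of the variant Hardy functions `h` based on the worm-induced
fundamental sequences: `h_0(x) = x`, `h_{t+1}(x) = h_t(x+1)`,
`h_t(x) = h_{t⟦x⟧}(x+1)` for limit `t`. -/
inductive hG : T → ℕ → ℕ → Prop where
  | zero (x) : hG T.zero x x
  | succ {r x y} : hG r (x + 1) y → hG (T.oadd T.zero r) x y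
  | lim {e r x y} (he : e ≠ T.zero) :
      hG (T.fundW (T.oadd e r) x) (x + 1) y → hG (T.oadd e r) x y


namespace T

/-! ### Layer A: ordinal measure lemmas -/

theorem o_zero : o zero = 0 := rfl
theorem o_oadd (e r : T) : o (oadd e r) = o r + Ordinal.omega0 ^ o e := rfl

theorem opow_pos' (a : Ordinal.{0}) : (0:Ordinal) < Ordinal.omega0 ^ a :=
  Ordinal.opow_pos a Ordinal.omega0_pos

theorem o_lt_oadd (e r : T) : o r < o (oadd e r) := by
  rw [o_oadd]
  simpa using (add_lt_add_iff_left (o r)).mpr (opow_pos' (o e))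

theorem o_rep (e r : T) : ∀ x : ℕ, o (rep e r x) = o r + Ordinal.omega0 ^ o e * x
  | 0 => by simp [rep]
  | x + 1 => by
    rw [rep, o_oadd, o_rep e r x, Nat.cast_succ, mul_add, mul_one, ← add_assoc]

theorem o_repOne (r : T) : ∀ x : ℕ, o (repOne r x) = o r + x
  | 0 => by simp [repOne]
  | x + 1 => by
    rw [repOne, o_oadd, o_repOne r x, Nat.cast_succ, o_zero, Ordinal.opow_zero, ← add_assoc]

theorem o_repPair (s r : T) :
    ∀ x : ℕ, o (repPair s r x) = o r + (Ordinal.omega0 ^ o s + 1) * x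
  | 0 => by simp [repPair]
  | x + 1 => by
    rw [repPair, o_oadd, o_oadd, o_repPair s r x, Nat.cast_succ, mul_add, mul_one,
      ← add_assoc, ← add_assoc, o_zero, Ordinal.opow_zero]

theorem o_oadd_succ (s r : T) :
    o (oadd (oadd zero s) r) = o r + Ordinal.omega0 ^ o s * Ordinal.omega0 := by
  rw [o_oadd, o_oadd, o_zero, Ordinal.opow_zero, Ordinal.opow_add, Ordinal.opow_one]

theorem fund_o_lt : ∀ (e r : T) (x : ℕ), e ≠ zero → o (fund (oadd e r) x) < o (oadd e r)
  | zero, r, x, h => absurd rfl h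
  | oadd zero s, r, x, _ => by
    show o (rep s r x) < _
    rw [o_rep, o_oadd_succ s r]
    exact (add_lt_add_iff_left (o r)).mpr
      (mul_lt_mul_of_pos_left (Ordinal.nat_lt_omega0 x) (opow_pos' (o s)))
  | oadd (oadd a b) s, r, x, _ => by
    show o (oadd (fund (oadd (oadd a b) s) x) r) < _
    rw [o_oadd, o_oadd]
    have ih := fund_o_lt (oadd a b) s x (by simp)
    exact (add_lt_add_iff_left (o r)).mpr
      ((Ordinal.opow_lt_opow_iff_right Ordinal.one_lt_omega0).mpr ih)

theorem fundW_o_lt : ∀ (e r : T) (x : ℕ), e ≠ zero → o (fundW (oadd e r) x) < o (oadd e r)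
  | zero, r, x, h => absurd rfl h
  | oadd zero zero, r, x, _ => by
    show o (repOne r x) < _
    rw [o_repOne, o_oadd_succ zero r, o_zero, Ordinal.opow_zero, one_mul]
    exact (add_lt_add_iff_left (o r)).mpr (Ordinal.nat_lt_omega0 x)
  | oadd zero (oadd a b), r, x, _ => by
    show o (repPair (oadd a b) r x) < _
    rw [o_repPair, o_oadd_succ (oadd a b) r]
    refine (add_lt_add_iff_left (o r)).mpr ?_
    have h1 : (1:Ordinal) ≤ Ordinal.omega0 ^ o (oadd a b) :=
      Order.one_le_iff_pos.mpr (opow_pos' _)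
    have h2 : Ordinal.omega0 ^ o (oadd a b) + 1 ≤ Ordinal.omega0 ^ o (oadd a b) * 2 := by
      have h2' : (2:Ordinal) = 1 + 1 := by norm_num
      rw [h2', mul_add, mul_one]; exact add_le_add_right h1 _
    have h3 : (Ordinal.omega0 ^ o (oadd a b) + 1) * (x : Ordinal)
        ≤ Ordinal.omega0 ^ o (oadd a b) * 2 * (x : Ordinal) := mul_le_mul_left h2 _
    refine lt_of_le_of_lt h3 ?_
    rw [mul_assoc]
    refine mul_lt_mul_of_pos_left ?_ (opow_pos' _)
    have h4 : ((2 * x : ℕ) : Ordinal) < Ordinal.omega0 := Ordinal.nat_lt_omega0 _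
    simpa [Nat.cast_mul] using h4
  | oadd (oadd a b) s, r, x, _ => by
    show o (oadd (fundW (oadd (oadd a b) s) x) r) < _
    rw [o_oadd, o_oadd]
    have ih := fundW_o_lt (oadd a b) s x (by simp)
    exact (add_lt_add_iff_left (o r)).mpr
      ((Ordinal.opow_lt_opow_iff_right Ordinal.one_lt_omega0).mpr ih)

/-! ### Layer A2: the Hardy functions as total functions -/

noncomputable def Hf : T → ℕ → ℕ
  | zero, x => x
  | oadd zero r, x => Hf r (x + 1)
  | oadd (oadd a b) r, x => Hf (fund (oadd (oadd a b) r) x) x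
termination_by t _ => o t
decreasing_by
  all_goals first
    | exact o_lt_oadd _ _
    | exact fund_o_lt _ _ _ (by simp)
    | exact fundW_o_lt _ _ _ (by simp)

noncomputable def hf : T → ℕ → ℕ
  | zero, x => x
  | oadd zero r, x => hf r (x + 1)
  | oadd (oadd a b) r, x => hf (fundW (oadd (oadd a b) r) x) (x + 1)
termination_by t _ => o t
decreasing_by
  all_goals first
    | exact o_lt_oadd _ _
    | exact fund_o_lt _ _ _ (by simp)
    | exact fundW_o_lt _ _ _ (by simp)

@[simp] theorem Hf_zero (x : ℕ) : Hf zero x = x := by rw [Hf]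
@[simp] theorem Hf_succ (r : T) (x : ℕ) : Hf (oadd zero r) x = Hf r (x + 1) := by rw [Hf]
theorem Hf_lim (a b r : T) (x : ℕ) :
    Hf (oadd (oadd a b) r) x = Hf (fund (oadd (oadd a b) r) x) x := by rw [Hf]

@[simp] theorem hf_zero (x : ℕ) : hf zero x = x := by rw [hf]
@[simp] theorem hf_succ (r : T) (x : ℕ) : hf (oadd zero r) x = hf r (x + 1) := by rw [hf]
theorem hf_lim (a b r : T) (x : ℕ) :
    hf (oadd (oadd a b) r) x = hf (fundW (oadd (oadd a b) r) x) (x + 1) := by rw [hf]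


/-! ### Layer B1: pass-through lemmas -/

theorem PT : ∀ (e r : T) (x : ℕ), Hf (oadd e r) x = Hf r (Hf (oadd e zero) x)
  | zero, r, x => by simp
  | oadd zero g, r, x => by
    have inner : ∀ (j : ℕ) (r' : T) (z : ℕ),
        Hf (rep g r' j) z = Hf r' (Hf (rep g zero j) z) := by
      intro j
      induction j with
      | zero => intro r' z; simp [rep]
      | succ j ih =>
        intro r' z
        show Hf (oadd g (rep g r' j)) z = Hf r' (Hf (oadd g (rep g zero j)) z)
        rw [PT g (rep g r' j) z, PT g (rep g zero j) z]
        exact ih r' _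
    rw [Hf_lim, Hf_lim]
    exact inner x r x
  | oadd (oadd a b) g, r, x => by
    rw [Hf_lim, Hf_lim]
    show Hf (oadd (fund (oadd (oadd a b) g) x) r) x
      = Hf r (Hf (oadd (fund (oadd (oadd a b) g) x) zero) x)
    exact PT (fund (oadd (oadd a b) g) x) r x
termination_by e _ _ => o e
decreasing_by
  all_goals first
    | exact o_lt_oadd _ _
    | exact fund_o_lt _ _ _ (by simp)
    | exact fundW_o_lt _ _ _ (by simp)

theorem PTh : ∀ (e r : T) (x : ℕ), hf (oadd e r) x = hf r (hf (oadd e zero) x)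
  | zero, r, x => by simp
  | oadd zero zero, r, x => by
    have inner : ∀ (j : ℕ) (r' : T) (z : ℕ),
        hf (repOne r' j) z = hf r' (hf (repOne zero j) z) := by
      intro j
      induction j with
      | zero => intro r' z; simp [repOne]
      | succ j ih =>
        intro r' z
        show hf (oadd zero (repOne r' j)) z = hf r' (hf (oadd zero (repOne zero j)) z)
        rw [hf_succ, hf_succ]
        exact ih r' _
    rw [hf_lim, hf_lim]
    exact inner x r (x + 1)
  | oadd zero (oadd a b), r, x => by
    have inner : ∀ (j : ℕ) (r' : T) (z : ℕ),
        hf (repPair (oadd a b) r' j) z = hf r' (hf (repPair (oadd a b) zero j) z) := by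
      intro j
      induction j with
      | zero => intro r' z; simp [repPair]
      | succ j ih =>
        intro r' z
        show hf (oadd zero (oadd (oadd a b) (repPair (oadd a b) r' j))) z
          = hf r' (hf (oadd zero (oadd (oadd a b) (repPair (oadd a b) zero j))) z)
        rw [hf_succ, hf_succ, PTh (oadd a b) (repPair (oadd a b) r' j) (z + 1),
          PTh (oadd a b) (repPair (oadd a b) zero j) (z + 1)]
        exact ih r' _
    rw [hf_lim, hf_lim]
    exact inner x r (x + 1)
  | oadd (oadd a b) g, r, x => by
    rw [hf_lim, hf_lim]
    show hf (oadd (fundW (oadd (oadd a b) g) x) r) (x + 1)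
      = hf r (hf (oadd (fundW (oadd (oadd a b) g) x) zero) (x + 1))
    exact PTh (fundW (oadd (oadd a b) g) x) r (x + 1)
termination_by e _ _ => o e
decreasing_by
  all_goals first
    | exact o_lt_oadd _ _
    | exact fund_o_lt _ _ _ (by simp)
    | exact fundW_o_lt _ _ _ (by simp)

/-- The effect of a single summand `ω^e` in the standard Hardy hierarchy. -/
noncomputable def pH (e : T) (x : ℕ) : ℕ := Hf (oadd e zero) x

/-- The effect of a single summand `ω^e` in the worm Hardy hierarchy. -/
noncomputable def ph (e : T) (x : ℕ) : ℕ := hf (oadd e zero) x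

theorem Hf_oadd (e r : T) (x : ℕ) : Hf (oadd e r) x = Hf r (pH e x) := PT e r x
theorem hf_oadd (e r : T) (x : ℕ) : hf (oadd e r) x = hf r (ph e x) := PTh e r x

@[simp] theorem pH_zero (x : ℕ) : pH zero x = x + 1 := by simp [pH]
@[simp] theorem ph_zero (x : ℕ) : ph zero x = x + 1 := by simp [ph]

theorem Hf_rep (g r : T) : ∀ (j : ℕ) (z : ℕ), Hf (rep g r j) z = Hf r ((pH g)^[j] z)
  | 0, z => by simp [rep]
  | j + 1, z => by
    show Hf (oadd g (rep g r j)) z = _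
    rw [Hf_oadd, Hf_rep g r j, ← Function.iterate_succ_apply]

theorem pH_succ (g : T) (x : ℕ) : pH (oadd zero g) x = (pH g)^[x] x := by
  show Hf _ _ = _
  rw [Hf_lim]
  show Hf (rep g zero x) x = _
  rw [Hf_rep]
  simp

theorem pH_lim (a b g : T) (x : ℕ) :
    pH (oadd (oadd a b) g) x = pH (fund (oadd (oadd a b) g) x) x := by
  show Hf _ _ = Hf _ _
  rw [Hf_lim]
  rfl

theorem hf_repOne (r : T) : ∀ (j z : ℕ), hf (repOne r j) z = hf r (z + j)
  | 0, z => by simp [repOne]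
  | j + 1, z => by
    show hf (oadd zero (repOne r j)) z = _
    rw [hf_succ, hf_repOne r j]
    congr 1
    omega

theorem ph_one (x : ℕ) : ph (oadd zero zero) x = 2 * x + 1 := by
  show hf _ _ = _
  rw [hf_lim]
  show hf (repOne zero x) (x + 1) = _
  rw [hf_repOne]
  simp; omega

theorem hf_repPair (a b r : T) : ∀ (j z : ℕ),
    hf (repPair (oadd a b) r j) z = hf r ((fun w => ph (oadd a b) (w + 1))^[j] z)
  | 0, z => by simp [repPair]
  | j + 1, z => by
    show hf (oadd zero (oadd (oadd a b) (repPair (oadd a b) r j))) z = _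
    rw [hf_succ, hf_oadd, hf_repPair a b r j, ← Function.iterate_succ_apply]

theorem ph_pair (a b : T) (x : ℕ) :
    ph (oadd zero (oadd a b)) x = (fun w => ph (oadd a b) (w + 1))^[x] (x + 1) := by
  show hf _ _ = _
  rw [hf_lim]
  show hf (repPair (oadd a b) zero x) (x + 1) = _
  rw [hf_repPair]
  simp

theorem ph_lim (a b g : T) (x : ℕ) :
    ph (oadd (oadd a b) g) x = ph (fundW (oadd (oadd a b) g) x) (x + 1) := by
  show hf _ _ = hf _ _
  rw [hf_lim]
  rfl


/-! ### Layer B2: step-down relation machinery -/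

inductive Step (z : ℕ) : T → T → Prop
  | pred (E : T) : Step z (oadd zero E) E
  | fd (a b g : T) (w : ℕ) (hw : w ≤ z) :
      Step z (oadd (oadd a b) g) (fund (oadd (oadd a b) g) w)

abbrev Steps (z : ℕ) : T → T → Prop := Relation.ReflTransGen (Step z)

theorem Step.o_lt {z : ℕ} {A B : T} (h : Step z A B) : o B < o A := by
  cases h
  · exact o_lt_oadd _ _
  · exact fund_o_lt _ _ _ (by simp)

theorem reach_tail : ∀ (f g : T) (z : ℕ), 1 ≤ z → Steps z (oadd f g) g
  | zero, g, z, _ => Relation.ReflTransGen.single (Step.pred g)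
  | oadd zero s, g, z, hz => by
    have h0 : Step z (oadd (oadd zero s) g) (rep s g z) := Step.fd zero s g z le_rfl
    have hrec : ∀ j : ℕ, Steps z (rep s g j) g := by
      intro j
      induction j with
      | zero => exact .refl
      | succ j ih => exact .trans (reach_tail s (rep s g j) z hz) ih
    exact .trans (.single h0) (hrec z)
  | oadd (oadd a b) s, g, z, hz => by
    have h0 : Step z (oadd (oadd (oadd a b) s) g) (oadd (fund (oadd (oadd a b) s) z) g) :=
      Step.fd (oadd a b) s g z le_rfl
    exact .trans (.single h0) (reach_tail (fund (oadd (oadd a b) s) z) g z hz)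
termination_by f _ _ _ => o f
decreasing_by
  all_goals first
    | exact o_lt_oadd _ _
    | exact fund_o_lt _ _ _ (by simp)
    | exact fundW_o_lt _ _ _ (by simp)

theorem rep_down (s g : T) (z : ℕ) (hz : 1 ≤ z) :
    ∀ {j k : ℕ}, k ≤ j → Steps z (rep s g j) (rep s g k) := by
  intro j
  induction j with
  | zero => intro k hk; interval_cases k; exact .refl
  | succ j ih =>
    intro k hk
    rcases Nat.eq_or_lt_of_le hk with rfl | hlt
    · exact .refl
    · exact .trans (reach_tail s (rep s g j) z hz) (ih (Nat.lt_succ_iff.mp hlt))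

theorem step_cong {X X' : T} (g : T) (z : ℕ) (hz : 1 ≤ z) (h : Step z X X') :
    Steps z (oadd X g) (oadd X' g) := by
  cases h with
  | pred =>
    have h0 : Step z (oadd (oadd zero X') g) (rep X' g z) := Step.fd zero X' g z le_rfl
    exact .trans (.single h0) (rep_down X' g z hz hz)
  | fd a b g₁ w hw =>
    exact Relation.ReflTransGen.single (Step.fd (oadd a b) g₁ g w hw)

theorem steps_cong {X X' : T} (g : T) (z : ℕ) (hz : 1 ≤ z) (h : Steps z X X') :
    Steps z (oadd X g) (oadd X' g) := by
  induction h with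
  | refl => exact .refl
  | tail _ hstep ih => exact ih.trans (step_cong g z hz hstep)

theorem crossfund : ∀ (f g : T) (z w : ℕ), 1 ≤ z → w ≤ z →
    Steps z (fund (oadd f g) z) (fund (oadd f g) w)
  | zero, _, _, _, _, _ => .refl
  | oadd zero s, g, z, w, hz, hw => rep_down s g z hz hw
  | oadd (oadd a b) s, g, z, w, hz, hw => by
    show Steps z (oadd (fund (oadd (oadd a b) s) z) g) (oadd (fund (oadd (oadd a b) s) w) g)
    exact steps_cong g z hz (crossfund (oadd a b) s z w hz hw)

theorem fund_ne_zero : ∀ (a b g : T) (x : ℕ), 1 ≤ x → fund (oadd (oadd a b) g) x ≠ zero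
  | zero, b, g, x, hx => by
    show rep b g x ≠ zero
    obtain ⟨y, rfl⟩ : ∃ y, x = y + 1 := ⟨x - 1, by omega⟩
    simp [rep]
  | oadd _ _, b, g, x, _ => by
    show oadd _ g ≠ zero
    simp

/-! ### Basic inequalities for `pH` -/

theorem iter_ge {f : ℕ → ℕ} (hf : ∀ b, b ≤ f b) : ∀ (n a : ℕ), a ≤ f^[n] a
  | 0, _ => le_rfl
  | n + 1, a => by
    rw [Function.iterate_succ_apply]
    exact le_trans (hf a) (iter_ge hf n (f a))

theorem pH_ge : ∀ (E : T) (a : ℕ), a ≤ pH E a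
  | zero, a => by simp
  | oadd zero g, a => by rw [pH_succ]; exact iter_ge (pH_ge g) a a
  | oadd (oadd x y) g, a => by
    rw [pH_lim]; exact pH_ge (fund (oadd (oadd x y) g) a) a
termination_by E _ => o E
decreasing_by
  all_goals first
    | exact o_lt_oadd _ _
    | exact fund_o_lt _ _ _ (by simp)
    | exact fundW_o_lt _ _ _ (by simp)

theorem sound : ∀ (E : T) (z : ℕ), 1 ≤ z → ∀ E', Steps z E E' → pH E' z ≤ pH E z := by
  suffices H : ∀ (n : Ordinal) (E : T), o E = n → ∀ (z : ℕ), 1 ≤ z → ∀ E',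
      Steps z E E' → pH E' z ≤ pH E z by
    intro E; exact H (o E) E rfl
  intro n
  refine Ordinal.induction (p := fun n => ∀ (E : T), o E = n → ∀ (z : ℕ), 1 ≤ z → ∀ E',
      Steps z E E' → pH E' z ≤ pH E z) n ?_
  clear n
  rintro n IH E rfl z hz E' h
  rcases h.cases_head with rfl | ⟨C, hstep, hchain⟩
  · exact le_rfl
  · have h2 : pH E' z ≤ pH C z := IH (o C) hstep.o_lt C rfl z hz E' hchain
    refine le_trans h2 ?_
    cases hstep with
    | pred =>
      rw [pH_succ]
      obtain ⟨k, rfl⟩ : ∃ k, z = k + 1 := ⟨z - 1, by omega⟩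
      rw [Function.iterate_succ_apply]
      exact iter_ge (pH_ge C) k (pH C (k + 1))
    | fd a b g w hw =>
      rw [pH_lim]
      exact IH (o (fund (oadd (oadd a b) g) z)) (fund_o_lt (oadd a b) g z (by simp)) _ rfl
        z hz _ (crossfund (oadd a b) g z w hz hw)

theorem pH_mono : ∀ (E : T) {a b : ℕ}, a ≤ b → pH E a ≤ pH E b
  | zero, a, b, h => by simpa using h
  | oadd zero g, a, b, h => by
    rw [pH_succ, pH_succ]
    have h1 : (pH g)^[a] a ≤ (pH g)^[a] b :=
      Monotone.iterate (fun _ _ hxy => pH_mono g hxy) a h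
    refine h1.trans ?_
    rw [show b = (b - a) + a from by omega, Function.iterate_add_apply]
    exact iter_ge (pH_ge g) (b - a) _
  | oadd (oadd x y) g, a, b, h => by
    rcases Nat.eq_zero_or_pos b with rfl | hb
    · have : a = 0 := by omega
      subst this; exact le_rfl
    · rw [pH_lim, pH_lim]
      refine (pH_mono (fund (oadd (oadd x y) g) a) h).trans ?_
      exact sound (fund (oadd (oadd x y) g) b) b hb _ (crossfund (oadd x y) g b a hb h)
termination_by E _ _ _ => o E
decreasing_by
  all_goals first
    | exact o_lt_oadd _ _
    | exact fund_o_lt _ _ _ (by simp)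
    | exact fundW_o_lt _ _ _ (by simp)

theorem pH_smono : ∀ (E : T) {a b : ℕ}, a < b → pH E a < pH E b
  | zero, a, b, h => by simpa using h
  | oadd zero g, a, b, h => by
    rw [pH_succ, pH_succ]
    have hs : StrictMono (pH g) := fun _ _ hxy => pH_smono g hxy
    have h1 : (pH g)^[a] a < (pH g)^[a] (a + 1) := (hs.iterate a) (by omega)
    refine h1.trans_le ?_
    have h2 : (pH g)^[a] (a + 1) ≤ (pH g)^[a] b :=
      Monotone.iterate (fun _ _ hxy => pH_mono g hxy) a (by omega)
    refine h2.trans ?_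
    rw [show b = (b - a) + a from by omega, Function.iterate_add_apply]
    exact iter_ge (pH_ge g) (b - a) _
  | oadd (oadd x y) g, a, b, h => by
    rw [pH_lim, pH_lim]
    have hb : 1 ≤ b := by omega
    refine (pH_smono (fund (oadd (oadd x y) g) a) h).trans_le ?_
    exact sound (fund (oadd (oadd x y) g) b) b hb _ (crossfund (oadd x y) g b a hb (by omega))
termination_by E _ _ _ => o E
decreasing_by
  all_goals first
    | exact o_lt_oadd _ _
    | exact fund_o_lt _ _ _ (by simp)
    | exact fundW_o_lt _ _ _ (by simp)

theorem pH_ge_succ : ∀ (E : T) {a : ℕ}, 1 ≤ a → a + 1 ≤ pH E a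
  | zero, a, _ => by simp
  | oadd zero g, a, ha => by
    obtain ⟨c, rfl⟩ : ∃ c, a = c + 1 := ⟨a - 1, by omega⟩
    rw [pH_succ, Function.iterate_succ_apply]
    exact le_trans (pH_ge_succ g (by omega)) (iter_ge (pH_ge g) c _)
  | oadd (oadd x y) g, a, ha => by
    rw [pH_lim]; exact pH_ge_succ (fund (oadd (oadd x y) g) a) ha
termination_by E _ _ => o E
decreasing_by
  all_goals first
    | exact o_lt_oadd _ _
    | exact fund_o_lt _ _ _ (by simp)
    | exact fundW_o_lt _ _ _ (by simp)

theorem iter_add {f : ℕ → ℕ} (h1 : ∀ b, 1 ≤ b → b + 1 ≤ f b) (h0 : ∀ b, b ≤ f b) :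
    ∀ (n a : ℕ), 1 ≤ a → a + n ≤ f^[n] a
  | 0, _, _ => by simp
  | n + 1, a, ha => by
    rw [Function.iterate_succ_apply]
    have hfa : a + 1 ≤ f a := h1 a ha
    have := iter_add h1 h0 n (f a) (by omega)
    omega

theorem pH_grow : ∀ (E : T), E ≠ zero → ∀ (a : ℕ), 2 * a ≤ pH E a
  | zero, h, _ => absurd rfl h
  | oadd zero g, _, a => by
    rcases Nat.eq_zero_or_pos a with rfl | ha
    · simp
    · rw [pH_succ]
      have := iter_add (fun b hb => pH_ge_succ g hb) (pH_ge g) a a ha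
      omega
  | oadd (oadd x y) g, _, a => by
    rcases Nat.eq_zero_or_pos a with rfl | ha
    · simp
    · rw [pH_lim]
      exact pH_grow (fund (oadd (oadd x y) g) a) (fund_ne_zero x y g a ha) a
termination_by E _ _ => o E
decreasing_by
  all_goals first
    | exact o_lt_oadd _ _
    | exact fund_o_lt _ _ _ (by simp)
    | exact fundW_o_lt _ _ _ (by simp)

theorem down1 : ∀ (f B : T) (z : ℕ), 1 ≤ z → Steps z (oadd f B) (oadd zero B)
  | zero, _, _, _ => .refl
  | oadd zero s, B, z, hz => by
    have h0 : Step z (oadd (oadd zero s) B) (rep s B z) := Step.fd zero s B z le_rfl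
    have h1 : Steps z (rep s B z) (rep s B 1) := rep_down s B z hz hz
    exact ((Relation.ReflTransGen.single h0).trans h1).trans (down1 s B z hz)
  | oadd (oadd a b) s, B, z, hz => by
    have h0 : Step z (oadd (oadd (oadd a b) s) B) (oadd (fund (oadd (oadd a b) s) z) B) :=
      Step.fd (oadd a b) s B z le_rfl
    exact (Relation.ReflTransGen.single h0).trans (down1 (fund (oadd (oadd a b) s) z) B z hz)
termination_by f _ _ _ => o f
decreasing_by
  all_goals first
    | exact o_lt_oadd _ _
    | exact fund_o_lt _ _ _ (by simp)
    | exact fundW_o_lt _ _ _ (by simp)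

theorem pH_step (f B : T) (hB : B ≠ zero) (z : ℕ) (hz : 2 ≤ z) :
    pH B (2 * z) ≤ pH (oadd f B) z := by
  have hzero : pH B (2 * z) ≤ pH (oadd zero B) z := by
    rw [pH_succ]
    have h1 : pH B (2 * z) ≤ pH B (pH B z) := pH_mono B (pH_grow B hB z)
    have h2 : pH B (pH B z) ≤ (pH B)^[z] z := by
      obtain ⟨k, rfl⟩ : ∃ k, z = k + 2 := ⟨z - 2, by omega⟩
      have he : (pH B)^[k + 2] (k + 2) = (pH B)^[k] (pH B (pH B (k + 2))) := by
        rw [Function.iterate_add_apply]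
        simp [Function.iterate_succ_apply']
      rw [he]
      exact iter_ge (pH_ge B) k _
    exact h1.trans h2
  cases f with
  | zero => exact hzero
  | oadd a b =>
    exact hzero.trans (sound (oadd (oadd a b) B) z (by omega) _ (down1 (oadd a b) B z (by omega)))

theorem ph_ge_succ : ∀ (E : T) (a : ℕ), a + 1 ≤ ph E a
  | zero, a => by simp
  | oadd zero zero, a => by rw [ph_one]; omega
  | oadd zero (oadd x y), a => by
    rw [ph_pair]
    have hyp : ∀ w, w ≤ (fun w => ph (oadd x y) (w + 1)) w := by
      intro w
      have := ph_ge_succ (oadd x y) (w + 1)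
      simpa using le_trans (by omega) this
    exact le_trans (by omega) (iter_ge hyp a (a + 1))
  | oadd (oadd x y) g, a => by
    rw [ph_lim]
    exact le_trans (by omega) (ph_ge_succ (fundW (oadd (oadd x y) g) a) (a + 1))
termination_by E _ => o E
decreasing_by
  all_goals first
    | exact o_lt_oadd _ _
    | exact fund_o_lt _ _ _ (by simp)
    | exact fundW_o_lt _ _ _ (by simp)


/-! ### Layer C0: wrapped terms and further chain lemmas -/

def SS (L R : T) : Prop := ∀ z z' : ℕ, 2 ≤ z → z + 1 ≤ z' → pH L z < pH R z'

def WRp : T → List T → T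
  | L, [] => L
  | L, t :: ts => WRp (oadd L t) ts

@[simp] theorem WRp_nil (L : T) : WRp L [] = L := rfl
@[simp] theorem WRp_cons (L t : T) (ts : List T) : WRp L (t :: ts) = WRp (oadd L t) ts := rfl

theorem WRp_o_mono {X Y : T} (h : o X < o Y) : ∀ ts : List T, o (WRp X ts) < o (WRp Y ts)
  | [] => h
  | t :: ts => WRp_o_mono (by
      rw [o_oadd, o_oadd]
      exact (add_lt_add_iff_left (o t)).mpr
        ((Ordinal.opow_lt_opow_iff_right Ordinal.one_lt_omega0).mpr h)) ts

theorem pH_WRp_lim : ∀ (a b u : T) (ts : List T) (z : ℕ),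
    pH (WRp (oadd (oadd a b) u) ts) z = pH (WRp (fund (oadd (oadd a b) u) z) ts) z
  | a, b, u, [], z => pH_lim a b u z
  | a, b, u, t :: ts, z => by
    show pH (WRp (oadd (oadd (oadd a b) u) t) ts) z = _
    rw [pH_WRp_lim (oadd a b) u t ts z]
    rfl

theorem pH_WRp_succ_cons (u t : T) (ts : List T) (z : ℕ) :
    pH (WRp (oadd zero u) (t :: ts)) z = pH (WRp (rep u t z) ts) z := by
  show pH (WRp (oadd (oadd zero u) t) ts) z = _
  rw [pH_WRp_lim zero u t ts z]
  rfl

theorem steps_congW {X X' : T} (z : ℕ) (hz : 1 ≤ z) (h : Steps z X X') :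
    ∀ ts : List T, Steps z (WRp X ts) (WRp X' ts)
  | [] => h
  | t :: ts => steps_congW z hz (steps_cong t z hz h) ts

theorem soundW {X X' : T} (z : ℕ) (hz : 1 ≤ z) (h : Steps z X X') (ts : List T) :
    pH (WRp X' ts) z ≤ pH (WRp X ts) z :=
  sound _ z hz _ (steps_congW z hz h ts)

theorem rep_reach (s g : T) (z : ℕ) (hz : 1 ≤ z) : ∀ j : ℕ, Steps z (rep s g j) g
  | 0 => .refl
  | j + 1 => .trans (reach_tail s (rep s g j) z hz) (rep_reach s g z hz j)

theorem repOne_down (g : T) (z : ℕ) :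
    ∀ {j k : ℕ}, k ≤ j → Steps z (repOne g j) (repOne g k) := by
  intro j
  induction j with
  | zero => intro k hk; interval_cases k; exact .refl
  | succ j ih =>
    intro k hk
    rcases Nat.eq_or_lt_of_le hk with rfl | hlt
    · exact .refl
    · exact .trans (.single (Step.pred (repOne g j))) (ih (Nat.lt_succ_iff.mp hlt))

/-- From `σ`-copies down to a single `+1`. -/
theorem reach_plus (σ X : T) (z : ℕ) (hz : 1 ≤ z) {c : ℕ} (hc : 1 ≤ c) :
    Steps z (rep σ X c) (oadd zero X) :=
  .trans (rep_down σ X z hz hc) (down1 σ X z hz)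

theorem XS : ∀ (a₂ b₂ s₂ : T) (u w : ℕ), u + 1 ≤ w → 2 ≤ w →
    Steps w (fund (oadd (oadd a₂ b₂) s₂) w) (oadd zero (fund (oadd (oadd a₂ b₂) s₂) u))
  | zero, b₂, s₂, u, w, huw, hw => by
    show Steps w (rep b₂ s₂ w) (oadd zero (rep b₂ s₂ u))
    have h1 : Steps w (rep b₂ s₂ w) (rep b₂ s₂ (u + 1)) := rep_down b₂ s₂ w (by omega) huw
    exact h1.trans (down1 b₂ (rep b₂ s₂ u) w (by omega))
  | oadd a₃ b₃, b₂, s₂, u, w, huw, hw => by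
    show Steps w (oadd (fund (oadd (oadd a₃ b₃) b₂) w) s₂) _
    have h1 := XS a₃ b₃ b₂ u w huw hw
    have h2 : Steps w (oadd (fund (oadd (oadd a₃ b₃) b₂) w) s₂)
        (oadd (oadd zero (fund (oadd (oadd a₃ b₃) b₂) u)) s₂) :=
      steps_cong s₂ w (by omega) h1
    have h3 : Step w (oadd (oadd zero (fund (oadd (oadd a₃ b₃) b₂) u)) s₂)
        (rep (fund (oadd (oadd a₃ b₃) b₂) u) s₂ 2) := Step.fd zero _ s₂ 2 hw
    have h4 : Steps w (rep (fund (oadd (oadd a₃ b₃) b₂) u) s₂ 2)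
        (oadd zero (oadd (fund (oadd (oadd a₃ b₃) b₂) u) s₂)) :=
      down1 _ _ w (by omega)
    exact (h2.trans (.single h3)).trans h4

theorem rep_zero_eq (X : T) : ∀ c : ℕ, rep zero X c = repOne X c
  | 0 => rfl
  | c + 1 => by rw [rep, repOne, rep_zero_eq X c]

theorem repOne_merge (A : T) : ∀ c : ℕ, repOne (oadd zero A) c = repOne A (c + 1)
  | 0 => rfl
  | c + 1 => by rw [repOne, repOne_merge A c]; rfl

theorem ITERLT {f g : ℕ → ℕ} (hf : ∀ a, a ≤ f a) (hg : ∀ a, a ≤ g a)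
    (hlt : ∀ u w, 2 ≤ u → u + 1 ≤ w → f u < g w) :
    ∀ z z' : ℕ, 2 ≤ z → z + 1 ≤ z' → f^[z] z < g^[z'] z' := by
  intro z z' hz hzz
  have key : ∀ i, f^[i] z + 1 ≤ g^[i] z' ∧ 2 ≤ f^[i] z := by
    intro i
    induction i with
    | zero => exact ⟨hzz, hz⟩
    | succ i ih =>
      have h2 := hlt (f^[i] z) (g^[i] z') ih.2 ih.1
      have h3 := hf (f^[i] z)
      constructor
      · rw [Function.iterate_succ_apply', Function.iterate_succ_apply']
        omega
      · rw [Function.iterate_succ_apply']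
        omega
  have h1 : f^[z] z < g^[z] z' := by have := (key z).1; omega
  have h2 : g^[z] z' ≤ g^[z'] z' := by
    rw [show z' = (z' - z) + z from by omega, Function.iterate_add_apply]
    exact iter_ge hg (z' - z) _
  omega

/-! ### Layer C1: the certificate relation and the main comparison theorem -/

inductive GP : T → T → Prop
  | reach {L R : T} : (∀ z : ℕ, 1 ≤ z → Steps z R L) → GP L R
  | q {a b ψ : T} {p c : ℕ} :
      GP (oadd (oadd a b) (repPair (oadd a b) ψ p)) (rep (oadd a b) ψ c) →
      GP (oadd (oadd a b) (repPair (oadd a b) ψ (p + 1))) (rep (oadd a b) ψ (c + 1))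
  | pairc {a b ψ : T} {p c : ℕ} :
      GP (oadd (oadd a b) (repPair (oadd a b) ψ p)) (rep (oadd a b) ψ c) →
      GP (repPair (oadd a b) ψ (p + 1)) (rep (oadd a b) ψ (c + 1))
  | junk {A X : T} (σ : T) {c c' : ℕ} :
      σ ≠ zero → GP A X → c + 1 ≤ c' → GP (rep σ (oadd zero A) c) (rep σ X c')
  | rone {A X : T} {c c' : ℕ} : GP A X → c ≤ c' → 1 ≤ c' → GP (repOne A c) (repOne X c')
  | reps {V V' W W' : T} {c c' : ℕ} :
      GP V V' → GP W W' → c ≤ c' → 1 ≤ c' → GP (rep V W c) (rep V' W' c')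

inductive LPG : List T → List T → Prop
  | nil : LPG [] []
  | cons {t t' : T} {ts ts' : List T} : GP t t' → LPG ts ts' → LPG (t :: ts) (t' :: ts')

theorem GP.refl (X : T) : GP X X := GP.reach (fun _ _ => .refl)

theorem steps_o_le {z : ℕ} {A B : T} (h : Steps z A B) : o B ≤ o A := by
  induction h with
  | refl => exact le_rfl
  | tail _ hstep ih => exact le_trans hstep.o_lt.le ih

theorem WRp_o_congr {X Y : T} (h : o X = o Y) : ∀ ts : List T, o (WRp X ts) = o (WRp Y ts)
  | [] => h
  | t :: ts => WRp_o_congr (by rw [o_oadd, o_oadd, h]) ts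

theorem WRp_o_le {X Y : T} (h : o X ≤ o Y) (ts : List T) : o (WRp X ts) ≤ o (WRp Y ts) := by
  rcases lt_or_eq_of_le h with h | h
  · exact (WRp_o_mono h ts).le
  · exact (WRp_o_congr h ts).le


theorem opow_mul_nat_lt {x y : Ordinal.{0}} (h : x < y) (n : ℕ) :
    Ordinal.omega0 ^ x * n < Ordinal.omega0 ^ y := by
  have h1 : Ordinal.omega0 ^ x * n < Ordinal.omega0 ^ x * Ordinal.omega0 :=
    mul_lt_mul_of_pos_left (Ordinal.nat_lt_omega0 n) (opow_pos' x)
  refine lt_of_lt_of_le h1 ?_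
  rw [← Ordinal.opow_succ]
  exact Ordinal.opow_le_opow_right Ordinal.omega0_pos (Order.succ_le_of_lt h)

theorem obnd (Y t' : T) (z' : ℕ) : o (rep Y t' z') < o (oadd (oadd zero Y) t') := by
  rw [o_rep, o_oadd]
  refine (add_lt_add_iff_left (o t')).mpr ?_
  refine opow_mul_nat_lt ?_ z'
  exact o_lt_oadd zero Y

theorem o_lt_rep (V W : T) {c : ℕ} (hc : 1 ≤ c) : o W < o (rep V W c) := by
  rw [o_rep]
  have h1 : (0:Ordinal) < Ordinal.omega0 ^ o V * c := by
    apply Left.mul_pos (opow_pos' _)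
    exact_mod_cast (show 0 < c by omega)
  calc o W = o W + 0 := (add_zero _).symm
    _ < o W + Ordinal.omega0 ^ o V * c := (add_lt_add_iff_left _).mpr h1

theorem o_lt_repOne (X : T) {c : ℕ} (hc : 1 ≤ c) : o X < o (repOne X c) := by
  rw [o_repOne]
  have h1 : (0:Ordinal) < (c : Ordinal) := by exact_mod_cast (show 0 < c by omega)
  calc o X = o X + 0 := (add_zero _).symm
    _ < o X + c := (add_lt_add_iff_left _).mpr h1

/-- The diagonal case of the main comparison theorem. -/
theorem DIAGLEM (N : Ordinal)
    (REC : ∀ (L₂ R₂ : T), GP L₂ R₂ → ∀ ts₂ ts₂', LPG ts₂ ts₂' → o (WRp R₂ ts₂') < N →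
      ∀ z z', 2 ≤ z → z + 1 ≤ z' → pH (WRp L₂ ts₂) z < pH (WRp R₂ ts₂') z') :
    ∀ (X : T) (ts ts' : List T), LPG ts ts' → o (WRp X ts') ≤ N →
      ∀ z z', 2 ≤ z → z + 1 ≤ z' → pH (WRp X ts) z < pH (WRp X ts') z' := by
  intro X ts ts' hl hle z z' hz hzz
  match X, ts, ts', hl with
  | zero, [], [], _ => simp; omega
  | zero, t :: ts₂, t' :: ts₂', LPG.cons dt hl₂ =>
    show pH (WRp (oadd zero t) ts₂) z < pH (WRp (oadd zero t') ts₂') z'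
    match ts₂, ts₂', hl₂ with
    | [], [], _ =>
      rw [show WRp (oadd zero t) [] = oadd zero t from rfl,
        show WRp (oadd zero t') [] = oadd zero t' from rfl, pH_succ, pH_succ]
      refine ITERLT (pH_ge t) (pH_ge t') ?_ z z' hz hzz
      intro u w hu huw
      refine REC t t' dt [] [] LPG.nil ?_ u w hu huw
      refine lt_of_lt_of_le (lt_of_lt_of_le (o_lt_oadd zero t') ?_) hle
      exact le_rfl
    | t₂ :: ts₃, t₂' :: ts₃', LPG.cons dt₂ hl₃ =>
      rw [pH_WRp_succ_cons, pH_WRp_succ_cons]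
      refine REC _ _ (GP.reps dt dt₂ (by omega) (by omega)) ts₃ ts₃' hl₃ ?_ z z' hz hzz
      refine lt_of_lt_of_le ?_ hle
      show o (WRp (rep t' t₂' z') ts₃') < o (WRp (oadd (oadd zero t') t₂') ts₃')
      refine WRp_o_mono ?_ ts₃'
      rw [o_rep, o_oadd, o_oadd, o_zero, Ordinal.opow_zero, Ordinal.opow_add,
        Ordinal.opow_one]
      exact (add_lt_add_iff_left (o t₂')).mpr
        (mul_lt_mul_of_pos_left (Ordinal.nat_lt_omega0 z') (opow_pos' (o t')))
  | oadd zero u, ts, ts', hl =>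
    match ts, ts', hl with
    | [], [], _ =>
      show pH (oadd zero u) z < pH (oadd zero u) z'
      rw [pH_succ, pH_succ]
      exact ITERLT (pH_ge u) (pH_ge u) (fun a b _ hab => pH_smono u (by omega)) z z' hz hzz
    | t :: ts₂, t' :: ts₂', LPG.cons dt hl₂ =>
      rw [pH_WRp_succ_cons, pH_WRp_succ_cons]
      refine REC _ _ (GP.reps (GP.refl u) dt (by omega) (by omega)) ts₂ ts₂' hl₂ ?_ z z' hz hzz
      refine lt_of_lt_of_le ?_ hle
      show o (WRp (rep u t' z') ts₂') < o (WRp (oadd (oadd zero u) t') ts₂')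
      refine WRp_o_mono ?_ ts₂'
      rw [o_rep, o_oadd, o_oadd, o_zero, Ordinal.opow_zero, Ordinal.opow_add,
        Ordinal.opow_one]
      exact (add_lt_add_iff_left (o t')).mpr
        (mul_lt_mul_of_pos_left (Ordinal.nat_lt_omega0 z') (opow_pos' (o u)))
  | oadd (oadd a b) u, ts, ts', hl =>
    rw [pH_WRp_lim a b u ts z, pH_WRp_lim a b u ts' z']
    have hcf : Steps z' (fund (oadd (oadd a b) u) z') (fund (oadd (oadd a b) u) z) :=
      crossfund (oadd a b) u z' z (by omega) (by omega)
    refine lt_of_lt_of_le ?_ (soundW z' (by omega) hcf ts')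
    refine REC _ _ (GP.refl (fund (oadd (oadd a b) u) z)) ts ts' hl ?_ z z' hz hzz
    refine lt_of_lt_of_le ?_ hle
    exact WRp_o_mono (fund_o_lt (oadd a b) u z (by simp)) ts'

/-- The main comparison theorem. -/
theorem MEGA : ∀ (L R : T), GP L R → ∀ (ts ts' : List T), LPG ts ts' →
    ∀ z z', 2 ≤ z → z + 1 ≤ z' → pH (WRp L ts) z < pH (WRp R ts') z' := by
  suffices H : ∀ (N : Ordinal) (R : T) (ts' : List T), o (WRp R ts') = N →
      ∀ (L : T), GP L R → ∀ ts, LPG ts ts' → ∀ z z', 2 ≤ z → z + 1 ≤ z' →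
      pH (WRp L ts) z < pH (WRp R ts') z' by
    intro L R d ts ts' hlp z z' hz hzz
    exact H _ R ts' rfl L d ts hlp z z' hz hzz
  intro N
  refine Ordinal.induction (p := fun N => ∀ (R : T) (ts' : List T), o (WRp R ts') = N →
      ∀ (L : T), GP L R → ∀ ts, LPG ts ts' → ∀ z z', 2 ≤ z → z + 1 ≤ z' →
      pH (WRp L ts) z < pH (WRp R ts') z') N ?_
  clear N
  intro N IH
  have REC : ∀ (L₂ R₂ : T), GP L₂ R₂ → ∀ ts₂ ts₂', LPG ts₂ ts₂' → o (WRp R₂ ts₂') < N →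
      ∀ z z', 2 ≤ z → z + 1 ≤ z' → pH (WRp L₂ ts₂) z < pH (WRp R₂ ts₂') z' :=
    fun L₂ R₂ d₂ ts₂ ts₂' hl₂ hlt z z' hz hzz =>
      IH _ hlt R₂ ts₂' rfl L₂ d₂ ts₂ hl₂ z z' hz hzz
  have main : ∀ (L R : T), GP L R → ∀ (ts ts' : List T), LPG ts ts' →
      o (WRp R ts') = N → ∀ z z', 2 ≤ z → z + 1 ≤ z' →
      pH (WRp L ts) z < pH (WRp R ts') z' := by
    intro L R d
    induction d with
    | @reach L R ch =>
      intro ts ts' hl hN z z' hz hzz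
      have hred : pH (WRp L ts') z' ≤ pH (WRp R ts') z' :=
        soundW z' (by omega) (ch z' (by omega)) ts'
      refine lt_of_lt_of_le ?_ hred
      refine DIAGLEM N REC L ts ts' hl ?_ z z' hz hzz
      rw [← hN]
      exact WRp_o_le (steps_o_le (ch 1 le_rfl)) ts'
    | @q a b ψ p c d0 _ =>
      intro ts ts' hl hN z z' hz hzz
      have hN' : o (WRp (oadd (oadd a b) (rep (oadd a b) ψ c)) ts') = N := hN
      rw [show rep (oadd a b) ψ (c+1) = oadd (oadd a b) (rep (oadd a b) ψ c) from rfl]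
      rw [pH_WRp_lim a b (repPair (oadd a b) ψ (p+1)) ts z,
          pH_WRp_lim a b (rep (oadd a b) ψ c) ts' z']
      have hflt : o (fund (oadd (oadd a b) (rep (oadd a b) ψ c)) z')
          < o (oadd (oadd a b) (rep (oadd a b) ψ c)) := fund_o_lt (oadd a b) _ z' (by simp)
      have hbnd : o (WRp (fund (oadd (oadd a b) (rep (oadd a b) ψ c)) z') ts') < N := by
        rw [← hN']; exact WRp_o_mono hflt ts'
      match a with
      | zero =>
        match b with
        | zero =>
          show pH (WRp (rep zero (repPair (oadd zero zero) ψ (p+1)) z) ts) z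
            < pH (WRp (rep zero (rep (oadd zero zero) ψ c) z') ts') z'
          rw [rep_zero_eq, rep_zero_eq,
            show repPair (oadd zero zero) ψ (p+1)
              = oadd zero (oadd (oadd zero zero) (repPair (oadd zero zero) ψ p)) from rfl,
            repOne_merge]
          refine REC _ _ (GP.rone d0 (by omega) (by omega)) ts ts' hl ?_ z z' hz hzz
          refine lt_of_le_of_lt (le_of_eq ?_) hbnd
          refine WRp_o_congr ?_ ts'
          rw [← rep_zero_eq]
          rfl
        | oadd b₁ b₂ =>
          show pH (WRp (rep (oadd b₁ b₂) (repPair (oadd zero (oadd b₁ b₂)) ψ (p+1)) z) ts) z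
            < pH (WRp (rep (oadd b₁ b₂) (rep (oadd zero (oadd b₁ b₂)) ψ c) z') ts') z'
          exact REC _ _ (GP.junk (oadd b₁ b₂) (by simp) d0 (by omega)) ts ts' hl hbnd
            z z' hz hzz
      | oadd a₁ a₂ =>
        have hxs : Steps z' (fund (oadd (oadd a₁ a₂) b) z')
            (oadd zero (fund (oadd (oadd a₁ a₂) b) z)) :=
          XS a₁ a₂ b z z' (by omega) (by omega)
        have hch : Steps z'
            (oadd (fund (oadd (oadd a₁ a₂) b) z') (rep (oadd (oadd a₁ a₂) b) ψ c))
            (oadd (oadd zero (fund (oadd (oadd a₁ a₂) b) z))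
              (rep (oadd (oadd a₁ a₂) b) ψ c)) :=
          steps_cong _ z' (by omega) hxs
        show pH (WRp (oadd (fund (oadd (oadd a₁ a₂) b) z)
            (repPair (oadd (oadd a₁ a₂) b) ψ (p+1))) ts) z
          < pH (WRp (oadd (fund (oadd (oadd a₁ a₂) b) z')
            (rep (oadd (oadd a₁ a₂) b) ψ c)) ts') z'
        refine lt_of_lt_of_le ?_ (soundW z' (by omega) hch ts')
        rw [pH_WRp_lim zero (fund (oadd (oadd a₁ a₂) b) z)
          (rep (oadd (oadd a₁ a₂) b) ψ c) ts' z']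
        refine REC (rep (fund (oadd (oadd a₁ a₂) b) z)
            (oadd zero (oadd (oadd (oadd a₁ a₂) b) (repPair (oadd (oadd a₁ a₂) b) ψ p))) 1)
            (rep (fund (oadd (oadd a₁ a₂) b) z) (rep (oadd (oadd a₁ a₂) b) ψ c) z')
            (GP.junk _ (fund_ne_zero a₁ a₂ b z (by omega)) d0 (by omega)) ts ts' hl ?_
            z z' hz hzz
        rw [← hN']
        refine WRp_o_mono ?_ ts'
        rw [o_rep, o_oadd]
        refine (add_lt_add_iff_left _).mpr (opow_mul_nat_lt ?_ z')
        exact fund_o_lt (oadd a₁ a₂) b z (by simp)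
    | @pairc a b ψ p c d0 _ =>
      intro ts ts' hl hN z z' hz hzz
      have hN' : o (WRp (oadd (oadd a b) (rep (oadd a b) ψ c)) ts') = N := hN
      have hch : Steps z' (oadd (oadd a b) (rep (oadd a b) ψ c))
          (oadd zero (rep (oadd a b) ψ c)) := down1 (oadd a b) _ z' (by omega)
      show pH (WRp (repPair (oadd a b) ψ (p+1)) ts) z
        < pH (WRp (oadd (oadd a b) (rep (oadd a b) ψ c)) ts') z'
      refine lt_of_lt_of_le ?_ (soundW z' (by omega) hch ts')
      match ts, ts', hl with
      | [], [], _ =>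
        show pH (oadd zero (oadd (oadd a b) (repPair (oadd a b) ψ p))) z
          < pH (oadd zero (rep (oadd a b) ψ c)) z'
        rw [pH_succ, pH_succ]
        refine ITERLT (pH_ge _) (pH_ge _) ?_ z z' hz hzz
        intro u w hu huw
        refine REC _ _ d0 [] [] LPG.nil ?_ u w hu huw
        rw [← hN']
        exact o_lt_oadd _ _
      | t :: ts₂, t' :: ts₂', LPG.cons dt hl₂ =>
        show pH (WRp (oadd zero (oadd (oadd a b) (repPair (oadd a b) ψ p))) (t :: ts₂)) z
          < pH (WRp (oadd zero (rep (oadd a b) ψ c)) (t' :: ts₂')) z'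
        rw [pH_WRp_succ_cons, pH_WRp_succ_cons]
        refine REC _ _ (GP.reps d0 dt (by omega) (by omega)) ts₂ ts₂' hl₂ ?_ z z' hz hzz
        rw [← hN']
        show o (WRp (rep (rep (oadd a b) ψ c) t' z') ts₂')
          < o (WRp (oadd (oadd (oadd a b) (rep (oadd a b) ψ c)) t') ts₂')
        refine WRp_o_mono ?_ ts₂'
        rw [o_rep, o_oadd]
        refine (add_lt_add_iff_left _).mpr (opow_mul_nat_lt ?_ z')
        exact o_lt_oadd _ _
    | @junk A X σ c c' hσ d0 hcc _ =>
      intro ts ts' hl hN z z' hz hzz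
      match c, c', hcc with
      | 0, c', hcc =>
        have hch : Steps z' (rep σ X c') (oadd zero X) :=
          reach_plus σ X z' (by omega) (by omega)
        refine lt_of_lt_of_le ?_ (soundW z' (by omega) hch ts')
        match ts, ts', hl with
        | [], [], _ =>
          show pH (oadd zero A) z < pH (oadd zero X) z'
          rw [pH_succ, pH_succ]
          refine ITERLT (pH_ge _) (pH_ge _) ?_ z z' hz hzz
          intro u w hu huw
          refine REC A X d0 [] [] LPG.nil ?_ u w hu huw
          rw [← hN]
          exact o_lt_rep σ X (by omega)
        | t :: ts₂, t' :: ts₂', LPG.cons dt hl₂ =>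
          show pH (WRp (oadd zero A) (t :: ts₂)) z
            < pH (WRp (oadd zero X) (t' :: ts₂')) z'
          rw [pH_WRp_succ_cons, pH_WRp_succ_cons]
          refine REC _ _ (GP.reps d0 dt (by omega) (by omega)) ts₂ ts₂' hl₂ ?_ z z' hz hzz
          rw [← hN]
          show o (WRp (rep X t' z') ts₂') < o (WRp (oadd (rep σ X c') t') ts₂')
          refine WRp_o_mono ?_ ts₂'
          rw [o_rep, o_oadd]
          refine (add_lt_add_iff_left _).mpr (opow_mul_nat_lt ?_ z')
          exact o_lt_rep σ X (by omega)
      | Nat.succ k, Nat.succ k2, hcc =>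
        match σ, hσ with
        | oadd σa σb, _ =>
          show pH (WRp (oadd (oadd σa σb) (rep (oadd σa σb) (oadd zero A) k)) ts) z
            < pH (WRp (oadd (oadd σa σb) (rep (oadd σa σb) X k2)) ts') z'
          have hN' : o (WRp (oadd (oadd σa σb) (rep (oadd σa σb) X k2)) ts') = N := hN
          rw [pH_WRp_lim σa σb _ ts z, pH_WRp_lim σa σb _ ts' z']
          match σa with
          | zero =>
            show pH (WRp (rep σb (rep (oadd zero σb) (oadd zero A) k) z) ts) z
              < pH (WRp (rep σb (rep (oadd zero σb) X k2) z') ts') z'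
            refine REC _ _ (GP.reps (GP.refl σb)
              (GP.junk (oadd zero σb) (by simp) d0 (by omega)) (by omega) (by omega))
              ts ts' hl ?_ z z' hz hzz
            rw [← hN']
            exact WRp_o_mono (fund_o_lt (oadd zero σb) _ z' (by simp)) ts'
          | oadd τ₁ τ₂ =>
            show pH (WRp (oadd (fund (oadd (oadd τ₁ τ₂) σb) z)
                (rep (oadd (oadd τ₁ τ₂) σb) (oadd zero A) k)) ts) z
              < pH (WRp (oadd (fund (oadd (oadd τ₁ τ₂) σb) z')
                (rep (oadd (oadd τ₁ τ₂) σb) X k2)) ts') z'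
            have hcf : Steps z' (fund (oadd (oadd τ₁ τ₂) σb) z')
                (fund (oadd (oadd τ₁ τ₂) σb) z) :=
              crossfund (oadd τ₁ τ₂) σb z' z (by omega) (by omega)
            have hch := steps_cong (rep (oadd (oadd τ₁ τ₂) σb) X k2) z' (by omega) hcf
            refine lt_of_lt_of_le ?_ (soundW z' (by omega) hch ts')
            refine REC
              (rep (fund (oadd (oadd τ₁ τ₂) σb) z)
                (rep (oadd (oadd τ₁ τ₂) σb) (oadd zero A) k) 1)
              (rep (fund (oadd (oadd τ₁ τ₂) σb) z)
                (rep (oadd (oadd τ₁ τ₂) σb) X k2) 1)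
              (GP.reps (GP.refl _)
                (GP.junk (oadd (oadd τ₁ τ₂) σb) (by simp) d0 (by omega))
                (by omega) (by omega)) ts ts' hl ?_ z z' hz hzz
            rw [← hN']
            refine WRp_o_mono ?_ ts'
            show o (oadd (fund (oadd (oadd τ₁ τ₂) σb) z) (rep (oadd (oadd τ₁ τ₂) σb) X k2))
              < o (oadd (oadd (oadd τ₁ τ₂) σb) (rep (oadd (oadd τ₁ τ₂) σb) X k2))
            rw [o_oadd, o_oadd]
            refine (add_lt_add_iff_left _).mpr ?_
            refine (Ordinal.opow_lt_opow_iff_right Ordinal.one_lt_omega0).mpr ?_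
            exact fund_o_lt (oadd τ₁ τ₂) σb z (by simp)
      | Nat.succ k, 0, hcc => exact absurd hcc (by omega)
    | @rone A X c c' d0 hcc hc1 _ =>
      intro ts ts' hl hN z z' hz hzz
      match c, c', hcc, hc1 with
      | 0, c', hcc, hc1 =>
        have hch : Steps z' (repOne X c') (repOne X 0) := repOne_down X z' (by omega)
        refine lt_of_lt_of_le ?_ (soundW z' (by omega) hch ts')
        refine REC A X d0 ts ts' hl ?_ z z' hz hzz
        rw [← hN]
        exact WRp_o_mono (o_lt_repOne X hc1) ts'
      | Nat.succ k, Nat.succ k2, hcc, _ =>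
        have hsub : GP (repOne A k) (repOne X k2) := by
          match k, k2, hcc with
          | 0, 0, _ => exact d0
          | 0, Nat.succ k2, _ => exact GP.rone d0 (by omega) (by omega)
          | Nat.succ k, Nat.succ k2, hcc => exact GP.rone d0 (by omega) (by omega)
        match ts, ts', hl with
        | [], [], _ =>
          show pH (oadd zero (repOne A k)) z < pH (oadd zero (repOne X k2)) z'
          rw [pH_succ, pH_succ]
          refine ITERLT (pH_ge _) (pH_ge _) ?_ z z' hz hzz
          intro u w hu huw
          refine REC _ _ hsub [] [] LPG.nil ?_ u w hu huw
          rw [← hN]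
          exact o_lt_oadd zero (repOne X k2)
        | t :: ts₂, t' :: ts₂', LPG.cons dt hl₂ =>
          show pH (WRp (oadd zero (repOne A k)) (t :: ts₂)) z
            < pH (WRp (oadd zero (repOne X k2)) (t' :: ts₂')) z'
          rw [pH_WRp_succ_cons, pH_WRp_succ_cons]
          refine REC _ _ (GP.reps hsub dt (by omega) (by omega)) ts₂ ts₂' hl₂ ?_ z z' hz hzz
          rw [← hN]
          exact WRp_o_mono (obnd (repOne X k2) t' z') ts₂'
    | @reps V V' W W' c c' dV dW hcc hc1 ihV _ =>
      intro ts ts' hl hN z z' hz hzz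
      match c, c', hcc, hc1 with
      | 0, c', hcc, hc1 =>
        show pH (WRp W ts) z < _
        have hch : Steps z' (rep V' W' c') W' := rep_reach V' W' z' (by omega) c'
        refine lt_of_lt_of_le ?_ (soundW z' (by omega) hch ts')
        refine REC W W' dW ts ts' hl ?_ z z' hz hzz
        rw [← hN]
        refine WRp_o_mono ?_ ts'
        rw [o_rep]
        have h1 : (0:Ordinal) < Ordinal.omega0 ^ o V' * c' := by
          apply Left.mul_pos (opow_pos' _)
          exact_mod_cast (show 0 < c' by omega)
        calc o W' = o W' + 0 := (add_zero _).symm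
          _ < o W' + Ordinal.omega0 ^ o V' * c' := (add_lt_add_iff_left _).mpr h1
      | Nat.succ k, Nat.succ k', hcc, _ =>
        show pH (WRp (oadd V (rep V W k)) ts) z < pH (WRp (oadd V' (rep V' W' k')) ts') z'
        have hsub : GP (rep V W k) (rep V' W' k') := by
          match k, k', hcc with
          | 0, 0, _ => exact dW
          | 0, Nat.succ k', _ => exact GP.reps dV dW (by omega) (by omega)
          | Nat.succ k, Nat.succ k', hcc => exact GP.reps dV dW (by omega) (by omega)
        have := ihV ((rep V W k) :: ts) ((rep V' W' k') :: ts') (LPG.cons hsub hl) hN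
          z z' hz hzz
        exact this
  exact fun R ts' hN L d ts hl => main L R d ts ts' hl hN


/-! ### Layer D: certificates for the worm pairs, and the key comparison -/

theorem GPSS {L R : T} (d : GP L R) : SS L R :=
  fun z z' hz hzz => MEGA L R d [] [] LPG.nil z z' hz hzz

theorem QCERT (a b ψ : T) : ∀ (p c : ℕ), p + 1 ≤ c →
    GP (oadd (oadd a b) (repPair (oadd a b) ψ p)) (rep (oadd a b) ψ c)
  | 0, c, hc => GP.reach (fun z hz => by
      have h := rep_down (oadd a b) ψ z hz (show 1 ≤ c by omega)
      exact h)
  | p + 1, c, hc => by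
    obtain ⟨c₀, rfl⟩ : ∃ c₀, c = c₀ + 1 := ⟨c - 1, by omega⟩
    exact GP.q (QCERT a b ψ p c₀ (by omega))

theorem WCERT : ∀ (f : T), f ≠ zero → ∀ (g : T) (n m : ℕ), n + 1 ≤ m →
    GP (fundW (oadd f g) n) (fund (oadd f g) m)
  | zero, hf, _, _, _, _ => absurd rfl hf
  | oadd zero zero, _, g, n, m, hnm => by
    show GP (repOne g n) (rep zero g m)
    rw [rep_zero_eq]
    exact GP.reach (fun z _ => repOne_down g z (by omega))
  | oadd zero (oadd a b), _, g, n, m, hnm => by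
    show GP (repPair (oadd a b) g n) (rep (oadd a b) g m)
    match n, hnm with
    | 0, hnm =>
      exact GP.reach (fun z hz => rep_reach (oadd a b) g z hz m)
    | Nat.succ k, hnm =>
      obtain ⟨m₀, rfl⟩ : ∃ m₀, m = m₀ + 1 := ⟨m - 1, by omega⟩
      exact GP.pairc (QCERT a b g k m₀ (by omega))
  | oadd (oadd a₁ a₂) s', hf, g, n, m, hnm => by
    show GP (oadd (fundW (oadd (oadd a₁ a₂) s') n) g) (oadd (fund (oadd (oadd a₁ a₂) s') m) g)
    exact GP.reps (WCERT (oadd a₁ a₂) (by simp) s' n m hnm) (GP.refl g) le_rfl le_rfl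

theorem MR0 : ∀ (f : T), f ≠ zero → ∀ (g : T) (m₀ z : ℕ), 2 ≤ z →
    Steps z (fund (oadd f g) (m₀ + 1)) (oadd zero (fund (oadd f g) m₀))
  | zero, hf, _, _, _, _ => absurd rfl hf
  | oadd zero e', _, g, m₀, z, hz => by
    show Steps z (oadd e' (rep e' g m₀)) (oadd zero (rep e' g m₀))
    exact down1 e' (rep e' g m₀) z (by omega)
  | oadd (oadd a₁ a₂) e', _, g, m₀, z, hz => by
    show Steps z (oadd (fund (oadd (oadd a₁ a₂) e') (m₀ + 1)) g)
      (oadd zero (oadd (fund (oadd (oadd a₁ a₂) e') m₀) g))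
    have h1 : Steps z (oadd (fund (oadd (oadd a₁ a₂) e') (m₀ + 1)) g)
        (oadd (oadd zero (fund (oadd (oadd a₁ a₂) e') m₀)) g) :=
      steps_cong g z (by omega) (MR0 (oadd a₁ a₂) (by simp) e' m₀ z hz)
    have h2 : Step z (oadd (oadd zero (fund (oadd (oadd a₁ a₂) e') m₀)) g)
        (rep (fund (oadd (oadd a₁ a₂) e') m₀) g 2) := Step.fd zero _ g 2 hz
    have h3 : Steps z (rep (fund (oadd (oadd a₁ a₂) e') m₀) g 2)
        (oadd zero (oadd (fund (oadd (oadd a₁ a₂) e') m₀) g)) :=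
      down1 _ _ z (by omega)
    exact (h1.trans (.single h2)).trans h3

/-- The key comparison: worm-step versus standard-step, with argument offset. -/
theorem WEXP (f : T) (hf : f ≠ zero) (g : T) (n m : ℕ) (hnm : n + 2 ≤ m) :
    pH (fundW (oadd f g) n) (m + 1) ≤ pH (fund (oadd f g) m) m := by
  obtain ⟨m₀, rfl⟩ : ∃ m₀, m = m₀ + 1 := ⟨m - 1, by omega⟩
  set Y₁ := fund (oadd f g) m₀ with hY₁
  have hm0 : 1 ≤ m₀ := by omega
  have hY₁ne : Y₁ ≠ zero := by
    rw [hY₁]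
    match f, hf with
    | oadd fa fb, _ => exact fund_ne_zero fa fb g m₀ hm0
  have hsound : pH (oadd zero Y₁) (m₀ + 1) ≤ pH (fund (oadd f g) (m₀ + 1)) (m₀ + 1) :=
    sound _ _ (by omega) _ (MR0 f hf g m₀ (m₀ + 1) (by omega))
  have hw : 2 * (m₀ + 1) ≤ (pH Y₁)^[m₀] (m₀ + 1) := by
    obtain ⟨k, rfl⟩ : ∃ k, m₀ = k + 1 := ⟨m₀ - 1, by omega⟩
    rw [Function.iterate_succ_apply]
    calc 2 * (k + 1 + 1) ≤ pH Y₁ (k + 1 + 1) := pH_grow Y₁ hY₁ne _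
      _ ≤ (pH Y₁)^[k] (pH Y₁ (k + 1 + 1)) := iter_ge (pH_ge Y₁) k _
  have hss : pH (fundW (oadd f g) n) (m₀ + 1 + 1) < pH Y₁ ((pH Y₁)^[m₀] (m₀ + 1)) := by
    refine GPSS (WCERT f hf g n m₀ (by omega)) _ _ (by omega) (by omega)
  have heq : pH Y₁ ((pH Y₁)^[m₀] (m₀ + 1)) = (pH Y₁)^[m₀ + 1] (m₀ + 1) := by
    rw [Function.iterate_succ_apply']
  have h2 : pH (oadd zero Y₁) (m₀ + 1) = (pH Y₁)^[m₀ + 1] (m₀ + 1) := pH_succ Y₁ (m₀ + 1)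
  calc pH (fundW (oadd f g) n) (m₀ + 1 + 1)
      ≤ pH Y₁ ((pH Y₁)^[m₀] (m₀ + 1)) := hss.le
    _ = pH (oadd zero Y₁) (m₀ + 1) := by rw [heq, h2]
    _ ≤ pH (fund (oadd f g) (m₀ + 1)) (m₀ + 1) := hsound

theorem Hf_mono : ∀ (t : T) {x y : ℕ}, x ≤ y → Hf t x ≤ Hf t y
  | zero, x, y, h => by simpa using h
  | oadd e r, x, y, h => by
    rw [Hf_oadd, Hf_oadd]
    exact Hf_mono r (pH_mono e h)

theorem Hf_repOne (r : T) : ∀ (j z : ℕ), Hf (repOne r j) z = Hf r (z + j)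
  | 0, z => by simp [repOne]
  | j + 1, z => by
    show Hf (oadd zero (repOne r j)) z = _
    rw [Hf_succ, Hf_repOne r j]
    congr 1
    omega

theorem Hf_repPair (a b r : T) : ∀ (j z : ℕ),
    Hf (repPair (oadd a b) r j) z = Hf r ((fun w => pH (oadd a b) (w + 1))^[j] z)
  | 0, z => by simp [repPair]
  | j + 1, z => by
    show Hf (oadd zero (oadd (oadd a b) (repPair (oadd a b) r j))) z = _
    rw [Hf_succ, Hf_oadd, Hf_repPair a b r j, ← Function.iterate_succ_apply]

theorem smono_add {f : ℕ → ℕ} (hf : StrictMono f) (a : ℕ) : ∀ c, f a + c ≤ f (a + c)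
  | 0 => by simp
  | c + 1 => by
    have h1 := smono_add hf a c
    have h2 : f (a + c) < f (a + c + 1) := hf (by omega)
    have h3 : a + (c + 1) = a + c + 1 := by omega
    rw [h3]
    omega

/-- The successor-exponent case of the key full-term comparison. -/
theorem HLEM_succ (a b : T) (n m : ℕ) (hnm : n + 2 ≤ m) :
    (fun w => pH (oadd a b) (w + 1))^[n] (m + 1) ≤ (pH (oadd a b))^[m] m := by
  set P := pH (oadd a b) with hP
  set Q := fun w => P (w + 1) with hQ
  have hPs : StrictMono P := fun _ _ h => pH_smono (oadd a b) h
  have hPg : ∀ w, 2 * w ≤ P w := fun w => pH_grow (oadd a b) (by simp) w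
  set B := P^[m - n] m with hB
  have hBge : 4 * m ≤ B := by
    rw [hB, show m - n = (m - n - 2) + 2 from by omega, Function.iterate_add_apply]
    have h1 : 4 * m ≤ P (P m) := by
      have := hPg m
      have := hPg (P m)
      omega
    exact le_trans h1 (iter_ge (fun w => le_trans (by omega) (hPg w)) (m - n - 2) _)
  have key : ∀ j, j ≤ n → Q^[j] (m + 1) + (n - j) ≤ P^[j] B := by
    intro j
    induction j with
    | zero =>
      intro _
      simp only [Function.iterate_zero, id]
      omega
    | succ j ih =>
      intro hj
      have h1 := ih (by omega)
      rw [Function.iterate_succ_apply', Function.iterate_succ_apply']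
      have h2 : Q (Q^[j] (m + 1)) = P (Q^[j] (m + 1) + 1) := rfl
      rw [h2]
      have h3 : P (Q^[j] (m + 1) + 1) + (n - j - 1) ≤ P (Q^[j] (m + 1) + 1 + (n - j - 1)) :=
        smono_add hPs _ _
      have h4 : P (Q^[j] (m + 1) + 1 + (n - j - 1)) ≤ P (P^[j] B) := by
        refine pH_mono (oadd a b) ?_
        omega
      omega
  have hfin := key n le_rfl
  have : P^[n] B = P^[m] m := by
    rw [hB, ← Function.iterate_add_apply, show n + (m - n) = m from by omega]
  omega

/-- The key full-term comparison between a worm step and a standard step. -/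
theorem HLEM : ∀ (a b r : T) (n m : ℕ), n + 2 ≤ m →
    Hf (fundW (oadd (oadd a b) r) n) (m + 1) ≤ Hf (fund (oadd (oadd a b) r) m) m
  | zero, zero, r, n, m, hnm => by
    show Hf (repOne r n) (m + 1) ≤ Hf (rep zero r m) m
    rw [rep_zero_eq, Hf_repOne, Hf_repOne]
    exact Hf_mono r (by omega)
  | zero, oadd b₁ b₂, r, n, m, hnm => by
    show Hf (repPair (oadd b₁ b₂) r n) (m + 1) ≤ Hf (rep (oadd b₁ b₂) r m) m
    rw [Hf_repPair, Hf_rep]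
    exact Hf_mono r (HLEM_succ b₁ b₂ n m hnm)
  | oadd a₁ a₂, b, r, n, m, hnm => by
    show Hf (oadd (fundW (oadd (oadd a₁ a₂) b) n) r) (m + 1)
      ≤ Hf (oadd (fund (oadd (oadd a₁ a₂) b) m) r) m
    rw [Hf_oadd, Hf_oadd]
    exact Hf_mono r (WEXP (oadd a₁ a₂) (by simp) b n m hnm)

/-- The main inequality. -/
theorem MAIN : ∀ (t : T) (n m : ℕ), n + 2 ≤ m → hf t n ≤ Hf t m
  | zero, n, m, h => by simpa using (by omega : n ≤ m)
  | oadd zero r, n, m, h => by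
    rw [hf_succ, Hf_succ]
    exact MAIN r (n + 1) (m + 1) (by omega)
  | oadd (oadd a b) r, n, m, h => by
    rw [hf_lim, Hf_lim]
    calc hf (fundW (oadd (oadd a b) r) n) (n + 1)
        ≤ Hf (fundW (oadd (oadd a b) r) n) (m + 1) :=
          MAIN (fundW (oadd (oadd a b) r) n) (n + 1) (m + 1) (by omega)
      _ ≤ Hf (fund (oadd (oadd a b) r) m) m := HLEM a b r n m h
termination_by t _ _ _ => o t
decreasing_by
  all_goals first
    | exact o_lt_oadd _ _
    | exact fundW_o_lt _ _ _ (by simp)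

end T

theorem HG_det : ∀ {t : T} {x y : ℕ}, HG t x y → y = T.Hf t x := by
  intro t x y h
  induction h with
  | zero x => simp
  | succ _ ih => simpa using ih
  | @lim e r x y he _ ih =>
    cases e with
    | zero => exact absurd rfl he
    | oadd a b => rw [T.Hf_lim]; exact ih

theorem hG_total : ∀ (t : T) (x : ℕ), hG t x (T.hf t x)
  | T.zero, x => by simpa using hG.zero x
  | T.oadd T.zero r, x => by simpa using hG.succ (hG_total r (x + 1))
  | T.oadd (T.oadd a b) r, x => by
    rw [T.hf_lim]
    exact hG.lim (by simp) (hG_total (T.fundW (T.oadd (T.oadd a b) r) x) (x + 1))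
termination_by t x => T.o t
decreasing_by
  all_goals first
    | exact T.o_lt_oadd _ _
    | exact T.fundW_o_lt _ _ _ (by simp)

/-- If `m ≥ n + 2` and `H_t(m)` is defined (with value `M`)
for a tree ordinal `t`, then `h_t(n)` is defined and `h_t(n) ≤ H_t(m)`, where
`H` uses the standard and `h` the worm-induced fundamental sequences. -/
theorem hardy_worm_le_hardy_standard (t : T) (n m : ℕ) (h : n + 2 ≤ m)
    (M : ℕ) (hH : HG t m M) :
    ∃ y, hG t n y ∧ y ≤ M := by
  obtain rfl : M = T.Hf t m := HG_det hH
  exact ⟨T.hf t n, hG_total t n, T.MAIN t n m h⟩
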